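/- Iterating the one-dimensional linear optimization lemma: Let p ≥ 1, k ≥ 1, (X, Σ, ν) a measure space, V a real vector space, Λ : V × ℝ^k → L^p(ν) linear. Then there exists a linear map ξ : V → ℝ^k such that for all v ∈ V, ∫_X |Λ(v, ξ(v))|^p dν ≤ (1 + 2^p)^k · inf_{w ∈ ℝ^k} ∫_X |Λ(v, w)|^p dν. -/

import Mathlib

open MeasureTheory

section Aux

variable {W : Type*} [AddCommGroup W] [Module ℝ W]

private lemma eps_le {a b : ℝ} (h : ∀ ε : ℝ, 0 < ε → a ≤ b + ε) : a ≤ b := by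
  by_contra hab
  push_neg at hab
  have := h ((a - b) / 2) (by linarith)
  linarith

private lemma semi_nonneg {W' : Type*} [AddCommGroup W'] [Module ℝ W'] (N : W' → ℝ)
    (hadd : ∀ x y, N (x + y) ≤ N x + N y)
    (hsmul : ∀ (c : ℝ) x, N (c • x) = |c| * N x) (x : W') : 0 ≤ N x := by
  have h0 : N 0 = 0 := by simpa using hsmul 0 0
  have h1 : N (-x) = N x := by simpa using hsmul (-1) x
  have := hadd x (-x)
  rw [add_neg_cancel, h0, h1] at this
  linarith

/-- One-dimensional linear selection lemma: constant 2 at the seminorm level. -/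
private lemma onedim (N : W × ℝ → ℝ) (hadd : ∀ x y, N (x + y) ≤ N x + N y)
    (hsmul : ∀ (c : ℝ) x, N (c • x) = |c| * N x) :
    ∃ ξ : W →ₗ[ℝ] ℝ, ∀ v : W, N (v, ξ v) ≤ 2 * ⨅ t : ℝ, N (v, t) := by
  have hNneg := semi_nonneg N hadd hsmul
  have hm_nonneg : ∀ v : W, 0 ≤ ⨅ t : ℝ, N (v, t) :=
    fun v => le_ciInf fun t => hNneg _
  set e : ℝ := N (0, 1) with he
  have hN0t : ∀ t : ℝ, N (0, t) = |t| * e := by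
    intro t
    have h : ((0 : W), t) = t • ((0 : W), (1 : ℝ)) := by
      simp [Prod.smul_mk]
    rw [h, hsmul]
  rcases le_or_gt e 0 with he0 | hepos
  · -- degenerate case : e = 0, N (v, t) does not depend on t
    have he0' : e = 0 := le_antisymm he0 (hNneg _)
    have hconst : ∀ (v : W) (t : ℝ), N (v, t) = N (v, 0) := by
      intro v t
      have h1 : N (v, t) ≤ N (v, 0) := by
        have := hadd (v, 0) (0, t)
        rw [hN0t, he0'] at this
        simpa using this
      have h2 : N (v, 0) ≤ N (v, t) := by
        have := hadd (v, t) (0, -t)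
        rw [hN0t, he0'] at this
        simpa using this
      exact le_antisymm h1 h2
    refine ⟨0, fun v => ?_⟩
    have h3 : (⨅ t : ℝ, N (v, t)) = N (v, 0) := by
      rw [show (fun t : ℝ => N (v, t)) = fun _ : ℝ => N (v, 0) from funext (hconst v)]
      exact ciInf_const
    rw [LinearMap.zero_apply, h3]
    nlinarith [hNneg ((v, 0) : W × ℝ)]
  · -- main case : e > 0
    set a : W → ℝ := fun v => ⨅ t : ℝ, (t + N (v, t) / e) with ha
    have habdd : ∀ v : W, ∀ t : ℝ, -(N (v, 0) / e) ≤ t + N (v, t) / e := by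
      intro v t
      have h2 : N (-((v, 0) : W × ℝ)) = N (v, 0) := by
        simpa using hsmul (-1) ((v, 0) : W × ℝ)
      have h3 : ((v, t) + -((v, 0) : W × ℝ)) = ((0 : W), t) := by
        ext <;> simp
      have h1 : |t| * e ≤ N (v, t) + N (v, 0) := by
        have := hadd (v, t) (-(v, 0))
        rw [h3, hN0t, h2] at this
        linarith
      have h4 : (|t| * e - N (v, 0)) / e ≤ N (v, t) / e := by
        gcongr <;> linarith
      rw [sub_div, mul_div_cancel_right₀ _ hepos.ne'] at h4
      have h5 : -t ≤ |t| := neg_le_abs t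
      linarith
    have habdd' : ∀ v : W, BddBelow (Set.range fun t : ℝ => t + N (v, t) / e) :=
      fun v => ⟨-(N (v, 0) / e), by rintro y ⟨t, rfl⟩; exact habdd v t⟩
    -- subadditivity of a
    have ha_add : ∀ v v' : W, a (v + v') ≤ a v + a v' := by
      intro v v'
      have H : ∀ t t' : ℝ, a (v + v') ≤ (t + N (v, t) / e) + (t' + N (v', t') / e) := by
        intro t t'
        have htri : N (v + v', t + t') ≤ N (v, t) + N (v', t') := hadd (v, t) (v', t')
        calc a (v + v') ≤ (t + t') + N (v + v', t + t') / e :=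
              ciInf_le (habdd' _) (t + t')
          _ ≤ (t + t') + (N (v, t) + N (v', t')) / e := by gcongr <;> linarith
          _ = (t + N (v, t) / e) + (t' + N (v', t') / e) := by ring
      have H1 : ∀ t' : ℝ, a (v + v') - (t' + N (v', t') / e) ≤ a v := by
        intro t'
        refine le_ciInf fun t => ?_
        linarith [H t t']
      have H2 : a (v + v') - a v ≤ a v' := by
        refine le_ciInf fun t' => ?_
        linarith [H1 t']
      linarith
    -- positive homogeneity of a
    have ha_smul : ∀ c : ℝ, 0 < c → ∀ v : W, a (c • v) = c * a v := by
      intro c hc v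
      have key : ∀ s : ℝ, N (c • v, c * s) = c * N (v, s) := by
        intro s
        have h : ((c • v, c * s) : W × ℝ) = c • ((v, s) : W × ℝ) := by
          simp [Prod.smul_mk, smul_eq_mul]
        rw [h, hsmul, abs_of_pos hc]
      apply le_antisymm
      · have hall : ∀ s : ℝ, a (c • v) ≤ c * (s + N (v, s) / e) := by
          intro s
          calc a (c • v) ≤ c * s + N (c • v, c * s) / e := ciInf_le (habdd' _) (c * s)
            _ = c * (s + N (v, s) / e) := by rw [key]; ring
        have h' : a (c • v) / c ≤ a v := by
          refine le_ciInf fun s => ?_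
          rw [div_le_iff₀ hc, mul_comm]
          exact hall s
        have := (div_le_iff₀ hc).mp h'
        linarith
      · refine le_ciInf fun t => ?_
        have h6 : a v ≤ t / c + N (v, t / c) / e := ciInf_le (habdd' _) (t / c)
        have hkey := key (t / c)
        rw [mul_div_cancel₀ _ hc.ne'] at hkey
        calc c * a v ≤ c * (t / c + N (v, t / c) / e) :=
              mul_le_mul_of_nonneg_left h6 hc.le
          _ = t + N (c • v, t) / e := by
              rw [hkey]; field_simp
    -- Hahn–Banach
    have ha0 : 0 ≤ a 0 := by
      have := ha_add 0 0
      rw [add_zero] at this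
      linarith
    obtain ⟨g, -, hg⟩ := exists_extension_of_le_sublinear
      ⟨(⊥ : Submodule ℝ W), (0 : (⊥ : Submodule ℝ W) →ₗ[ℝ] ℝ)⟩ a
      (fun c hc x => ha_smul c hc x)
      (fun x y => ha_add x y)
      (fun x => by
        have hx : (x : W) = 0 := (Submodule.mem_bot ℝ).mp x.2
        simp only [LinearMap.zero_apply]
        rw [hx]
        exact ha0)
    refine ⟨g, fun v => ?_⟩
    refine eps_le fun ε hε => ?_
    -- pick a near-minimizer t
    have hlt : (⨅ t : ℝ, N (v, t)) < (⨅ t : ℝ, N (v, t)) + ε / 2 := by linarith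
    obtain ⟨t, ht⟩ := exists_lt_of_ciInf_lt hlt
    -- g v is within N(v,t)/e of t
    have hgu : g v ≤ t + N (v, t) / e := le_trans (hg v) (ciInf_le (habdd' _) t)
    have hgl : -(g v) ≤ -t + N (v, t) / e := by
      have h1 : g (-v) ≤ a (-v) := hg (-v)
      have h2 : a (-v) ≤ -t + N (-v, -t) / e := ciInf_le (habdd' _) (-t)
      have h3 : N (-v, -t) = N (v, t) := by
        simpa using hsmul (-1) ((v, t) : W × ℝ)
      rw [h3] at h2
      have h4 := g.map_neg v
      linarith [le_trans h1 h2]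
    -- conclude
    have hdecomp : ((v, g v) : W × ℝ) = (v, t) + (0, g v - t) := by
      ext <;> simp
    have hstep : N (v, g v) ≤ N (v, t) + |g v - t| * e := by
      calc N (v, g v) ≤ N (v, t) + N (0, g v - t) := by
            rw [hdecomp]; exact hadd _ _
        _ = N (v, t) + |g v - t| * e := by rw [hN0t]
    have habs : |g v - t| * e ≤ N (v, t) := by
      have h7 : |g v - t| ≤ N (v, t) / e := by
        rw [abs_le]
        constructor <;> [skip; skip] <;> linarith
      calc |g v - t| * e ≤ (N (v, t) / e) * e := by
            exact mul_le_mul_of_nonneg_right h7 hepos.le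
        _ = N (v, t) := div_mul_cancel₀ _ hepos.ne'
    linarith

/-- Iterated (`k`-dimensional) linear selection lemma at the seminorm level,
with constant `2 ^ k`. -/
private lemma multidim (k : ℕ) (V : Type*) [AddCommGroup V] [Module ℝ V]
    (N : V × (Fin k → ℝ) → ℝ) (hadd : ∀ x y, N (x + y) ≤ N x + N y)
    (hsmul : ∀ (c : ℝ) x, N (c • x) = |c| * N x) :
    ∃ ξ : V →ₗ[ℝ] (Fin k → ℝ), ∀ v : V,
      N (v, ξ v) ≤ 2 ^ k * ⨅ w : Fin k → ℝ, N (v, w) := by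
  induction k with
  | zero =>
    refine ⟨0, fun v => ?_⟩
    have h1 : (⨅ w : Fin 0 → ℝ, N (v, w)) = N (v, 0) := by
      rw [show (fun w : Fin 0 → ℝ => N (v, w)) = fun _ : Fin 0 → ℝ => N (v, 0) from
        funext fun w => by rw [Subsingleton.elim w 0]]
      exact ciInf_const
    rw [h1, pow_zero, one_mul, LinearMap.zero_apply]
  | succ k ih =>
    -- split off the first coordinate
    let T : ((V × (Fin k → ℝ)) × ℝ) →ₗ[ℝ] (V × (Fin (k + 1) → ℝ)) :=
      { toFun := fun x => (x.1.1, Fin.cons x.2 x.1.2)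
        map_add' := by
          rintro ⟨⟨v, w⟩, t⟩ ⟨⟨v', w'⟩, t'⟩
          refine Prod.ext rfl ?_
          funext i
          refine Fin.cases ?_ (fun j => ?_) i <;> simp
        map_smul' := by
          rintro c ⟨⟨v, w⟩, t⟩
          refine Prod.ext rfl ?_
          funext i
          refine Fin.cases ?_ (fun j => ?_) i <;> simp }
    set M : (V × (Fin k → ℝ)) × ℝ → ℝ := fun x => N (T x) with hM
    have hMadd : ∀ x y, M (x + y) ≤ M x + M y := by
      intro x y; simp only [hM, LinearMap.map_add]; exact hadd _ _
    have hMsmul : ∀ (c : ℝ) x, M (c • x) = |c| * M x := by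
      intro c x; simp only [hM, LinearMap.map_smul]; exact hsmul _ _
    have hMneg := semi_nonneg M hMadd hMsmul
    obtain ⟨η, hη⟩ := onedim M hMadd hMsmul
    -- the reduced seminorm on V × ℝ^k
    let S : (V × (Fin k → ℝ)) →ₗ[ℝ] (V × (Fin (k + 1) → ℝ)) :=
      T.comp (LinearMap.prod LinearMap.id η)
    set N' : V × (Fin k → ℝ) → ℝ := fun u => N (S u) with hN'
    have hN'add : ∀ x y, N' (x + y) ≤ N' x + N' y := by
      intro x y; simp only [hN', LinearMap.map_add]; exact hadd _ _
    have hN'smul : ∀ (c : ℝ) x, N' (c • x) = |c| * N' x := by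
      intro c x; simp only [hN', LinearMap.map_smul]; exact hsmul _ _
    have hN'neg := semi_nonneg N' hN'add hN'smul
    have hNneg := semi_nonneg N hadd hsmul
    obtain ⟨ξ', hξ'⟩ := ih N' hN'add hN'smul
    -- the combined selection
    refine ⟨(LinearMap.snd ℝ V (Fin (k + 1) → ℝ)).comp
      (S.comp (LinearMap.prod LinearMap.id ξ')), fun v => ?_⟩
    have hval : N (v, (LinearMap.snd ℝ V (Fin (k + 1) → ℝ)).comp
        (S.comp (LinearMap.prod LinearMap.id ξ')) v) = N' (v, ξ' v) := rfl
    rw [hval]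
    -- comparison of the two infima
    have hbddN' : BddBelow (Set.range fun w' : Fin k → ℝ => N' (v, w')) :=
      ⟨0, by rintro y ⟨w', rfl⟩; exact hN'neg _⟩
    have hbddN : BddBelow (Set.range fun w : Fin (k + 1) → ℝ => N (v, w)) :=
      ⟨0, by rintro y ⟨w, rfl⟩; exact hNneg _⟩
    have hcomp : ∀ w : Fin (k + 1) → ℝ,
        (⨅ w' : Fin k → ℝ, N' (v, w')) ≤ 2 * N (v, w) := by
      intro w
      have hbddM : BddBelow (Set.range fun t : ℝ => M ((v, Fin.tail w), t)) :=
        ⟨0, by rintro y ⟨t, rfl⟩; exact hMneg _⟩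
      calc (⨅ w' : Fin k → ℝ, N' (v, w')) ≤ N' (v, Fin.tail w) :=
            ciInf_le hbddN' (Fin.tail w)
        _ = M ((v, Fin.tail w), η (v, Fin.tail w)) := rfl
        _ ≤ 2 * ⨅ t : ℝ, M ((v, Fin.tail w), t) := hη (v, Fin.tail w)
        _ ≤ 2 * M ((v, Fin.tail w), w 0) := by
            have := ciInf_le hbddM (w 0)
            linarith
        _ = 2 * N (v, w) := by
            have : M ((v, Fin.tail w), w 0) = N (v, Fin.cons (w 0) (Fin.tail w)) := rfl
            rw [this, Fin.cons_self_tail]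
    have hinf : (⨅ w' : Fin k → ℝ, N' (v, w')) ≤
        2 * ⨅ w : Fin (k + 1) → ℝ, N (v, w) := by
      have h : (⨅ w' : Fin k → ℝ, N' (v, w')) / 2 ≤
          ⨅ w : Fin (k + 1) → ℝ, N (v, w) := by
        refine le_ciInf fun w => ?_
        have := hcomp w
        linarith
      linarith
    calc N' (v, ξ' v) ≤ 2 ^ k * ⨅ w' : Fin k → ℝ, N' (v, w') := hξ' v
      _ ≤ 2 ^ k * (2 * ⨅ w : Fin (k + 1) → ℝ, N (v, w)) := by
          have h2k : (0 : ℝ) ≤ 2 ^ k := by positivity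
          exact mul_le_mul_of_nonneg_left hinf h2k
      _ = 2 ^ (k + 1) * ⨅ w : Fin (k + 1) → ℝ, N (v, w) := by ring

end Aux

/-- **Linear Map Lemma (iterated, `k`-dimensional case).**
Let `p ≥ 1`, `k ≥ 1`, `(X, Σ, ν)` a measure space, `V` a real vector space, and
`Λ : V × ℝ^k → L^p(ν)` a linear map.  Then there exists a linear map `ξ : V → ℝ^k`
such that for all `v ∈ V`,
`∫ |Λ(v, ξ v)|^p dν ≤ (1 + 2^p)^k · inf_{w ∈ ℝ^k} ∫ |Λ(v, w)|^p dν`. -/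
theorem stmt1 {X : Type*} [MeasurableSpace X] (ν : Measure X) (p : ℝ) (hp : 1 ≤ p)
    (k : ℕ) (hk : 1 ≤ k) (V : Type*) [AddCommGroup V] [Module ℝ V]
    (Λ : (V × (Fin k → ℝ)) →ₗ[ℝ] Lp ℝ (ENNReal.ofReal p) ν) :
    ∃ ξ : V →ₗ[ℝ] (Fin k → ℝ), ∀ v : V,
      ∫ x, |(Λ (v, ξ v)) x| ^ p ∂ν ≤
        (1 + 2 ^ p) ^ k * ⨅ w : Fin k → ℝ, ∫ x, |(Λ (v, w)) x| ^ p ∂ν := by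
  have hp0 : (0 : ℝ) < p := lt_of_lt_of_le one_pos hp
  haveI : Fact (1 ≤ ENNReal.ofReal p) := ⟨ENNReal.one_le_ofReal.mpr hp⟩
  have hpzero : ENNReal.ofReal p ≠ 0 := (ENNReal.ofReal_pos.mpr hp0).ne'
  have hptop : ENNReal.ofReal p ≠ (⊤ : ENNReal) := ENNReal.ofReal_ne_top
  have htoReal : (ENNReal.ofReal p).toReal = p := ENNReal.toReal_ofReal hp0.le
  -- the integral equals the p-th power of the Lp norm
  have key : ∀ f : Lp ℝ (ENNReal.ofReal p) ν, ∫ x, |f x| ^ p ∂ν = ‖f‖ ^ p := by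
    intro f
    have hint : 0 ≤ ∫ x, ‖f x‖ ^ p ∂ν :=
      integral_nonneg fun x => Real.rpow_nonneg (norm_nonneg _) p
    have h := (Lp.memLp f).eLpNorm_eq_integral_rpow_norm hpzero hptop
    rw [htoReal] at h
    have hnorm : ‖f‖ = (∫ x, ‖f x‖ ^ p ∂ν) ^ p⁻¹ := by
      rw [Lp.norm_def, h, ENNReal.toReal_ofReal (Real.rpow_nonneg hint p⁻¹)]
    calc ∫ x, |f x| ^ p ∂ν = ∫ x, ‖f x‖ ^ p ∂ν := by
          simp only [Real.norm_eq_abs]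
      _ = ‖f‖ ^ p := by rw [hnorm, Real.rpow_inv_rpow hint hp0.ne']
  -- apply the abstract lemma to the norm seminorm
  obtain ⟨ξ, hξ⟩ := multidim k V (fun x => ‖Λ x‖)
    (fun x y => by
      show ‖Λ (x + y)‖ ≤ ‖Λ x‖ + ‖Λ y‖
      rw [LinearMap.map_add]; exact norm_add_le _ _)
    (fun c x => by
      show ‖Λ (c • x)‖ = |c| * ‖Λ x‖
      rw [LinearMap.map_smul, norm_smul, Real.norm_eq_abs])
  refine ⟨ξ, fun v => ?_⟩
  set m : ℝ := ⨅ w : Fin k → ℝ, ‖Λ (v, w)‖ with hm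
  have hbdd : BddBelow (Set.range fun w : Fin k → ℝ => ‖Λ (v, w)‖) :=
    ⟨0, by rintro y ⟨w, rfl⟩; exact norm_nonneg _⟩
  have hm0 : 0 ≤ m := le_ciInf fun w => norm_nonneg _
  rw [key]
  have hiInf : (⨅ w : Fin k → ℝ, ∫ x, |(Λ (v, w)) x| ^ p ∂ν) =
      ⨅ w : Fin k → ℝ, ‖Λ (v, w)‖ ^ p := iInf_congr fun w => key _
  rw [hiInf]
  have h1 : ‖Λ (v, ξ v)‖ ≤ 2 ^ k * m := hξ v
  have h2 : ‖Λ (v, ξ v)‖ ^ p ≤ ((2 : ℝ) ^ k * m) ^ p :=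
    Real.rpow_le_rpow (norm_nonneg _) h1 hp0.le
  have h3 : ((2 : ℝ) ^ k * m) ^ p = ((2 : ℝ) ^ k) ^ p * m ^ p :=
    Real.mul_rpow (by positivity) hm0
  have h4 : (((2 : ℝ) ^ k) ^ p : ℝ) = ((2 : ℝ) ^ p) ^ k := by
    rw [← Real.rpow_natCast (2 : ℝ) k, ← Real.rpow_natCast ((2 : ℝ) ^ p) k,
      ← Real.rpow_mul (by norm_num), ← Real.rpow_mul (by norm_num), mul_comm]
  have h5 : m ^ p ≤ ⨅ w : Fin k → ℝ, ‖Λ (v, w)‖ ^ p :=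
    le_ciInf fun w => Real.rpow_le_rpow hm0 (ciInf_le hbdd w) hp0.le
  have h6 : ((2 : ℝ) ^ p) ^ k ≤ (1 + 2 ^ p) ^ k := by
    apply pow_le_pow_left₀ (by positivity)
    linarith [Real.rpow_nonneg (by norm_num : (0 : ℝ) ≤ 2) p]
  calc ‖Λ (v, ξ v)‖ ^ p ≤ ((2 : ℝ) ^ p) ^ k * m ^ p := by
        rw [← h4, ← h3]; exact h2
    _ ≤ (1 + 2 ^ p) ^ k * ⨅ w : Fin k → ℝ, ‖Λ (v, w)‖ ^ p :=
        mul_le_mul h6 h5 (Real.rpow_nonneg hm0 p) (by positivity)
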